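/- Let K be a bounded linear operator on H and let Λ = (Λ_i)_{i∈I} be a g-sequence. Then Λ is a K-g-frame for H if and only if Λ is a Bessel g-sequence and there exists a Bessel g-sequence Γ = (Γ_i)_{i∈I} such that K f = ∑_{i∈I} Λ_i* (Γ_i f) for all f ∈ H. -/

import Mathlib

open ContinuousLinearMap
open scoped ENNReal InnerProductSpace
set_option linter.unusedSectionVars false
set_option maxHeartbeats 1000000

noncomputable section

variable {I : Type*} {H : Type*} [NormedAddCommGroup H] [InnerProductSpace ℂ H] [CompleteSpace H]
  {G : I → Type*} [∀ i, NormedAddCommGroup (G i)] [∀ i, InnerProductSpace ℂ (G i)]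
  [∀ i, CompleteSpace (G i)]

/-- `Λ` is a Bessel g-sequence: for some `B > 0`, `∑ᵢ ‖Λᵢ f‖² ≤ B ‖f‖²` for all `f`. -/
def IsGBessel (Λ : ∀ i, H →L[ℂ] G i) : Prop :=
  ∃ B : ℝ, 0 < B ∧ ∀ f : H,
    Summable (fun i => ‖Λ i f‖ ^ 2) ∧ (∑' i, ‖Λ i f‖ ^ 2) ≤ B * ‖f‖ ^ 2

/-- `Λ` is a `K`-g-frame: for some `A, B > 0`,
`A ‖K* f‖² ≤ ∑ᵢ ‖Λᵢ f‖² ≤ B ‖f‖²` for all `f`. -/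
def IsKgFrame (K : H →L[ℂ] H) (Λ : ∀ i, H →L[ℂ] G i) : Prop :=
  ∃ A B : ℝ, 0 < A ∧ 0 < B ∧ ∀ f : H,
    Summable (fun i => ‖Λ i f‖ ^ 2) ∧
    A * ‖ContinuousLinearMap.adjoint K f‖ ^ 2 ≤ (∑' i, ‖Λ i f‖ ^ 2) ∧
    (∑' i, ‖Λ i f‖ ^ 2) ≤ B * ‖f‖ ^ 2

/-- `T : (⊕ᵢ Hᵢ)_{ℓ²} → H` is the synthesis operator of `Λ`, characterized by its adjoint
(the analysis operator) satisfying `(T* f)ᵢ = Λᵢ f` for all `f`. -/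
def IsSynthesis (Λ : ∀ i, H →L[ℂ] G i) (T : lp G 2 →L[ℂ] H) : Prop :=
  ∀ (f : H) (i : I), (ContinuousLinearMap.adjoint T f : ∀ i, G i) i = Λ i f

/-- `Γ` is a `K`-dual (Bessel g-sequence) of `Λ`: `K f = ∑ᵢ Λᵢ* (Γᵢ f)` for all `f`,
the sum converging in `H`. -/
def IsKDual (K : H →L[ℂ] H) (Λ Γ : ∀ i, H →L[ℂ] G i) : Prop :=
  ∀ f : H, HasSum (fun i => ContinuousLinearMap.adjoint (Λ i) (Γ i f)) (K f)

lemma memℓp_two_of_summable {x : ∀ i, G i} (h : Summable fun i => ‖x i‖ ^ 2) :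
    Memℓp x 2 := by
  apply memℓp_gen
  have h2 : (2 : ℝ≥0∞).toReal = 2 := by norm_num
  rw [h2]
  convert h using 2 with i
  rw [← Real.rpow_natCast _ 2]; norm_num

lemma lp_summable_sq (x : lp G 2) : Summable fun i => ‖(x : ∀ i, G i) i‖ ^ 2 := by
  have h := (memℓp_gen_iff (p := 2) (by norm_num)).1 (lp.memℓp x)
  have h2 : (2 : ℝ≥0∞).toReal = 2 := by norm_num
  rw [h2] at h
  convert h using 2 with i
  rw [← Real.rpow_natCast _ 2]; norm_num

lemma lp_norm_sq (x : lp G 2) : ‖x‖ ^ 2 = ∑' i, ‖(x : ∀ i, G i) i‖ ^ 2 := by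
  have h := lp.norm_rpow_eq_tsum (p := 2) (by norm_num) x
  have h2 : (2 : ℝ≥0∞).toReal = 2 := by norm_num
  rw [h2] at h
  calc ‖x‖ ^ 2 = ‖x‖ ^ (2:ℝ) := by rw [← Real.rpow_natCast ‖x‖ 2]; norm_num
    _ = ∑' i, ‖(x : ∀ i, G i) i‖ ^ (2:ℝ) := h
    _ = ∑' i, ‖(x : ∀ i, G i) i‖ ^ 2 := by
        congr 1; ext i; rw [← Real.rpow_natCast _ 2]; norm_num

def analysisOp (Λ : ∀ i, H →L[ℂ] G i) {B : ℝ} (hB : 0 ≤ B)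
    (h : ∀ f : H, Summable (fun i => ‖Λ i f‖^2) ∧ (∑' i, ‖Λ i f‖^2) ≤ B * ‖f‖^2) :
    H →L[ℂ] lp G 2 :=
  LinearMap.mkContinuous
    { toFun := fun f => ⟨fun i => Λ i f, memℓp_two_of_summable (h f).1⟩
      map_add' := fun f g => Subtype.ext (funext fun i => map_add (Λ i) f g)
      map_smul' := fun c f => Subtype.ext (funext fun i => map_smul (Λ i) c f) }
    (Real.sqrt B) (fun f => by
      have hx : ‖(⟨fun i => Λ i f, memℓp_two_of_summable (h f).1⟩ : lp G 2)‖ ^ 2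
          = ∑' i, ‖Λ i f‖ ^ 2 := lp_norm_sq _
      have hle : ‖(⟨fun i => Λ i f, memℓp_two_of_summable (h f).1⟩ : lp G 2)‖ ^ 2
          ≤ B * ‖f‖ ^ 2 := le_of_eq_of_le hx (h f).2
      calc ‖_‖ = Real.sqrt (‖(⟨fun i => Λ i f, memℓp_two_of_summable (h f).1⟩ : lp G 2)‖ ^ 2) :=
            (Real.sqrt_sq (norm_nonneg _)).symm
        _ ≤ Real.sqrt (B * ‖f‖ ^ 2) := Real.sqrt_le_sqrt hle
        _ = Real.sqrt B * ‖f‖ := by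
            rw [Real.sqrt_mul hB, Real.sqrt_sq (norm_nonneg f)])

def lpCoord (i : I) : lp G 2 →L[ℂ] G i :=
  LinearMap.mkContinuous
    { toFun := fun x => (x : ∀ i, G i) i
      map_add' := fun x y => by exact congrFun (lp.coeFn_add x y) i
      map_smul' := fun c x => by exact congrFun (lp.coeFn_smul c x) i }
    1 (fun x => by rw [one_mul]; exact lp.norm_apply_le_norm (by norm_num) x i)

lemma hasSum_adjoint_apply (U : H →L[ℂ] lp G 2) (Λ : ∀ i, H →L[ℂ] G i)
    (hU : ∀ (f : H) (i : I), (U f : ∀ i, G i) i = Λ i f) (x : lp G 2) :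
    HasSum (fun i => ContinuousLinearMap.adjoint (Λ i) ((x : ∀ i, G i) i))
      (ContinuousLinearMap.adjoint U x) := by
  classical
  have hsingle : ∀ (i : I) (a : G i),
      ContinuousLinearMap.adjoint U (lp.single 2 i a) = ContinuousLinearMap.adjoint (Λ i) a := by
    intro i a
    refine ext_inner_right ℂ fun v => ?_
    rw [adjoint_inner_left, adjoint_inner_left, lp.inner_single_left, hU]
  have h1 := (lp.hasSum_single (E := G) (p := 2) (by norm_num) x).mapL
    (ContinuousLinearMap.adjoint U)
  exact h1.congr_fun fun i => (hsingle i _).symm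

lemma exists_dual (K : H →L[ℂ] H) (Λ : ∀ i, H →L[ℂ] G i) {A B : ℝ} (hA : 0 < A) (hB : 0 < B)
    (h : ∀ f : H, Summable (fun i => ‖Λ i f‖ ^ 2) ∧
      A * ‖ContinuousLinearMap.adjoint K f‖ ^ 2 ≤ (∑' i, ‖Λ i f‖ ^ 2) ∧
      (∑' i, ‖Λ i f‖ ^ 2) ≤ B * ‖f‖ ^ 2) :
    ∃ Γ : ∀ i, H →L[ℂ] G i,
      (∃ C : ℝ, 0 < C ∧ ∀ f : H, Summable (fun i => ‖Γ i f‖ ^ 2) ∧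
        (∑' i, ‖Γ i f‖ ^ 2) ≤ C * ‖f‖ ^ 2) ∧
      ∀ f : H, HasSum (fun i => ContinuousLinearMap.adjoint (Λ i) (Γ i f)) (K f) := by
  classical
  set U : H →L[ℂ] lp G 2 := analysisOp Λ hB.le (fun f => ⟨(h f).1, (h f).2.2⟩) with hUdef
  have hUapply : ∀ (f : H) (i : I), (U f : ∀ i, G i) i = Λ i f := fun f i => rfl
  have hUnorm : ∀ f : H, ‖U f‖ ^ 2 = ∑' i, ‖Λ i f‖ ^ 2 := fun f => lp_norm_sq _
  have key2 : ∀ a b : H, U a = U b →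
      ContinuousLinearMap.adjoint K a = ContinuousLinearMap.adjoint K b := by
    intro a b hab
    have h0 : U (a - b) = 0 := by rw [map_sub, hab, sub_self]
    have h1 : A * ‖ContinuousLinearMap.adjoint K (a - b)‖ ^ 2 ≤ ‖U (a - b)‖ ^ 2 := by
      rw [hUnorm]; exact (h (a - b)).2.1
    rw [h0, norm_zero] at h1
    have hsq : ‖ContinuousLinearMap.adjoint K (a - b)‖ ^ 2 ≤ 0 := by nlinarith [h1]
    have hn : ‖ContinuousLinearMap.adjoint K (a - b)‖ ^ 2 = 0 := le_antisymm hsq (by positivity)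
    have h2 : ‖ContinuousLinearMap.adjoint K (a - b)‖ = 0 :=
      pow_eq_zero_iff (n := 2) (by norm_num) |>.mp hn
    have h3 := norm_eq_zero.mp h2
    rw [map_sub] at h3
    exact sub_eq_zero.mp h3
  set p : Submodule ℂ (lp G 2) := LinearMap.range (U : H →ₗ[ℂ] lp G 2) with hpdef
  set M : Submodule ℂ (lp G 2) := p.topologicalClosure with hMdef
  haveI : CompleteSpace M := (Submodule.isClosed_topologicalClosure p).completeSpace_coe
  have hpick : ∀ y : p, ∃ x : H, U x = (y : lp G 2) := fun y => LinearMap.mem_range.mp y.2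
  choose pick hpickspec using hpick
  have keypick : ∀ (y : p) (a : H), U a = (y : lp G 2) →
      ContinuousLinearMap.adjoint K (pick y) = ContinuousLinearMap.adjoint K a :=
    fun y a ha => key2 _ _ ((hpickspec y).trans ha.symm)
  set φlin : p →ₗ[ℂ] H :=
    { toFun := fun y => ContinuousLinearMap.adjoint K (pick y)
      map_add' := fun y z => by
        show ContinuousLinearMap.adjoint K (pick (y + z)) = _
        rw [keypick (y + z) (pick y + pick z)
          (by rw [map_add, hpickspec, hpickspec]; rfl), map_add]
      map_smul' := fun c y => by
        show ContinuousLinearMap.adjoint K (pick (c • y)) = _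
        rw [keypick (c • y) (c • pick y)
          (by rw [map_smul, hpickspec]; rfl), map_smul]; rfl } with hφdef
  have φbound : ∀ y : p, ‖φlin y‖ ≤ Real.sqrt A⁻¹ * ‖y‖ := by
    intro y
    have h1 : A * ‖ContinuousLinearMap.adjoint K (pick y)‖ ^ 2 ≤ ‖U (pick y)‖ ^ 2 := by
      rw [hUnorm]; exact (h (pick y)).2.1
    rw [hpickspec] at h1
    have hyn : ‖(y : lp G 2)‖ = ‖y‖ := rfl
    rw [hyn] at h1
    have h2 : ‖ContinuousLinearMap.adjoint K (pick y)‖ ^ 2 ≤ A⁻¹ * ‖y‖ ^ 2 := by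
      rw [inv_mul_eq_div, le_div_iff₀ hA]; linarith
    calc ‖φlin y‖ = Real.sqrt (‖ContinuousLinearMap.adjoint K (pick y)‖ ^ 2) := by
          rw [Real.sqrt_sq (norm_nonneg _)]; rfl
      _ ≤ Real.sqrt (A⁻¹ * ‖y‖ ^ 2) := Real.sqrt_le_sqrt h2
      _ = Real.sqrt A⁻¹ * ‖y‖ := by
          rw [Real.sqrt_mul (by positivity), Real.sqrt_sq (norm_nonneg _)]
  set φ : p →L[ℂ] H := LinearMap.mkContinuous φlin (Real.sqrt A⁻¹) φbound with hφcdef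
  set e : p →L[ℂ] M :=
    LinearMap.mkContinuous (Submodule.inclusion p.le_topologicalClosure) 1
      (fun y => by rw [one_mul]; exact le_of_eq rfl) with hedef
  have h_dense : DenseRange e := by
    intro x
    rw [closure_subtype]
    have himg : (Subtype.val '' Set.range e : Set (lp G 2)) = (p : Set (lp G 2)) := by
      ext z
      constructor
      · rintro ⟨w, ⟨y, rfl⟩, rfl⟩; exact y.2
      · intro hz; exact ⟨e ⟨z, hz⟩, ⟨⟨z, hz⟩, rfl⟩, rfl⟩
    rw [himg]
    have hx2 : (x : lp G 2) ∈ M := x.2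
    have h4 : (M : Set (lp G 2)) = closure (p : Set (lp G 2)) :=
      Submodule.topologicalClosure_coe p
    rw [← h4]
    exact hx2
  have h_e : IsUniformInducing e :=
    (Isometry.of_dist_eq (f := ⇑e) fun a b => rfl).isUniformInducing
  set φext : M →L[ℂ] H := φ.extend e with hextdef
  set Y : lp G 2 →L[ℂ] H := φext ∘L (Submodule.orthogonalProjectionOnto M) with hYdef
  have hY : ∀ f : H, Y (U f) = ContinuousLinearMap.adjoint K f := by
    intro f
    have hm : U f ∈ M := p.le_topologicalClosure (LinearMap.mem_range_self (U : H →ₗ[ℂ] lp G 2) f)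
    have h1 : Submodule.orthogonalProjectionOnto M (U f) = e ⟨U f, LinearMap.mem_range_self (U : H →ₗ[ℂ] lp G 2) f⟩ := by
      have h2 := Submodule.orthogonalProjectionOnto_mem_subspace_eq_self (K := M) ⟨U f, hm⟩
      rw [show ((⟨U f, hm⟩ : M) : lp G 2) = U f from rfl] at h2
      rw [h2]; exact Subtype.ext rfl
    show φext (Submodule.orthogonalProjectionOnto M (U f)) = _
    rw [h1, ContinuousLinearMap.extend_eq _ h_dense h_e]
    show ContinuousLinearMap.adjoint K (pick _) = _
    exact keypick _ f rfl
  set X : H →L[ℂ] lp G 2 := ContinuousLinearMap.adjoint Y with hXdef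
  have hUX : ∀ f : H, ContinuousLinearMap.adjoint U (X f) = K f := by
    intro f
    have hYU : Y ∘L U = ContinuousLinearMap.adjoint K := ContinuousLinearMap.ext hY
    have h1 : ContinuousLinearMap.adjoint (Y ∘L U)
        = ContinuousLinearMap.adjoint (ContinuousLinearMap.adjoint K) := by rw [hYU]
    rw [adjoint_comp, adjoint_adjoint] at h1
    calc ContinuousLinearMap.adjoint U (X f)
        = (ContinuousLinearMap.adjoint U ∘L ContinuousLinearMap.adjoint Y) f := rfl
      _ = K f := by rw [h1]
  clear_value X Y φext e φ φlin
  refine ⟨fun i => (lpCoord i) ∘L X, ⟨‖X‖ ^ 2 + 1, by positivity, fun f => ?_⟩, fun f => ?_⟩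
  · have hcoord : ∀ i, (lpCoord (G := G) i ∘L X) f = (X f : ∀ i, G i) i := fun i => rfl
    constructor
    · exact (lp_summable_sq (X f)).congr fun i => by rw [hcoord]
    · have h1 : (∑' i, ‖(lpCoord (G := G) i ∘L X) f‖ ^ 2) = ‖X f‖ ^ 2 := by
        rw [lp_norm_sq]
        exact (tsum_congr fun i => by rw [hcoord]).symm
      rw [h1]
      have h2 : ‖X f‖ ≤ ‖X‖ * ‖f‖ := le_opNorm X f
      nlinarith [norm_nonneg (X f), norm_nonneg X, norm_nonneg f, sq_nonneg ‖f‖]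
  · have h1 := hasSum_adjoint_apply U Λ hUapply (X f)
    rw [hUX] at h1
    exact h1

lemma lower_bound_of_dual (K : H →L[ℂ] H) (Λ Γ : ∀ i, H →L[ℂ] G i)
    (hΛ : ∀ f : H, Summable fun i => ‖Λ i f‖ ^ 2)
    {C : ℝ} (hC : 0 < C)
    (hΓ : ∀ f : H, Summable (fun i => ‖Γ i f‖ ^ 2) ∧ (∑' i, ‖Γ i f‖ ^ 2) ≤ C * ‖f‖ ^ 2)
    (hdual : ∀ f : H, HasSum (fun i => ContinuousLinearMap.adjoint (Λ i) (Γ i f)) (K f))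
    (f : H) :
    C⁻¹ * ‖ContinuousLinearMap.adjoint K f‖ ^ 2 ≤ ∑' i, ‖Λ i f‖ ^ 2 := by
  set g := ContinuousLinearMap.adjoint K f with hgdef
  set u : lp G 2 := ⟨fun i => Λ i f, memℓp_two_of_summable (hΛ f)⟩ with hu
  set v : lp G 2 := ⟨fun i => Γ i g, memℓp_two_of_summable (hΓ g).1⟩ with hv
  have h1 : HasSum (fun i => ⟪Λ i f, Γ i g⟫_ℂ) ⟪u, v⟫_ℂ := lp.hasSum_inner u v
  have h2 : HasSum (fun i => ⟪Λ i f, Γ i g⟫_ℂ) ⟪f, K g⟫_ℂ := by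
    have := (hdual g).mapL (innerSL ℂ f)
    refine this.congr_fun fun i => ?_
    simp only [innerSL_apply_apply]
    exact (adjoint_inner_right (Λ i) f (Γ i g)).symm
  have huv : ⟪u, v⟫_ℂ = ⟪f, K g⟫_ℂ := h1.unique h2
  have hgg : (⟪g, g⟫_ℂ) = ⟪f, K g⟫_ℂ := adjoint_inner_left K g f
  have hnorm : (‖g‖ : ℝ) ^ 2 = ‖(⟪g, g⟫_ℂ)‖ := by
    rw [inner_self_eq_norm_sq_to_K]
    simp [norm_pow]
  have hvbound : ‖v‖ ≤ Real.sqrt C * ‖g‖ := by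
    have h3 : ‖v‖ ^ 2 ≤ C * ‖g‖ ^ 2 := le_of_eq_of_le (lp_norm_sq v) (hΓ g).2
    calc ‖v‖ = Real.sqrt (‖v‖ ^ 2) := (Real.sqrt_sq (norm_nonneg _)).symm
      _ ≤ Real.sqrt (C * ‖g‖ ^ 2) := Real.sqrt_le_sqrt h3
      _ = Real.sqrt C * ‖g‖ := by rw [Real.sqrt_mul hC.le, Real.sqrt_sq (norm_nonneg _)]
  have key : ‖g‖ ^ 2 ≤ ‖u‖ * (Real.sqrt C * ‖g‖) := by
    calc ‖g‖ ^ 2 = ‖(⟪g, g⟫_ℂ)‖ := hnorm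
      _ = ‖(⟪u, v⟫_ℂ)‖ := by rw [huv, hgg]
      _ ≤ ‖u‖ * ‖v‖ := norm_inner_le_norm u v
      _ ≤ ‖u‖ * (Real.sqrt C * ‖g‖) := by
          exact mul_le_mul_of_nonneg_left hvbound (norm_nonneg u)
  have hgle : ‖g‖ ≤ Real.sqrt C * ‖u‖ := by
    rcases eq_or_lt_of_le (norm_nonneg g) with h0 | h0
    · rw [← h0]; positivity
    · have := key
      rw [pow_two, mul_comm ‖u‖ _, mul_assoc] at this
      have := le_of_mul_le_mul_left (by linarith [this] : ‖g‖ * ‖g‖ ≤ ‖g‖ * (Real.sqrt C * ‖u‖)) h0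
      linarith [this]
  have hfinal : ‖g‖ ^ 2 ≤ C * ‖u‖ ^ 2 := by
    calc ‖g‖ ^ 2 ≤ (Real.sqrt C * ‖u‖) ^ 2 := by
          apply pow_le_pow_left₀ (norm_nonneg g) hgle
      _ = C * ‖u‖ ^ 2 := by rw [mul_pow, Real.sq_sqrt hC.le]
  have husq : ‖u‖ ^ 2 = ∑' i, ‖Λ i f‖ ^ 2 := lp_norm_sq u
  rw [husq] at hfinal
  rw [inv_mul_le_iff₀ hC] at *
  linarith [hfinal]

/-- `Λ` is a `K`-g-frame iff `Λ` is a Bessel g-sequence and there is a Bessel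
g-sequence `Γ` with `K f = ∑ᵢ Λᵢ* (Γᵢ f)` for all `f`. -/
theorem isKgFrame_iff_exists_KDual
    (K : H →L[ℂ] H) (Λ : ∀ i, H →L[ℂ] G i) :
    IsKgFrame K Λ ↔
      IsGBessel Λ ∧ ∃ Γ : ∀ i, H →L[ℂ] G i, IsGBessel Γ ∧ IsKDual K Λ Γ := by
  constructor
  · rintro ⟨A, B, hA, hB, h⟩
    refine ⟨⟨B, hB, fun f => ⟨(h f).1, (h f).2.2⟩⟩, ?_⟩
    obtain ⟨Γ, ⟨C, hC, hΓ⟩, hdual⟩ := exists_dual K Λ hA hB h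
    exact ⟨Γ, ⟨C, hC, hΓ⟩, hdual⟩
  · rintro ⟨⟨B, hB, hΛ⟩, Γ, ⟨C, hC, hΓ⟩, hdual⟩
    exact ⟨C⁻¹, B, by positivity, hB, fun f =>
      ⟨(hΛ f).1, lower_bound_of_dual K Λ Γ (fun f => (hΛ f).1) hC hΓ hdual f, (hΛ f).2⟩⟩
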